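/- There exists a constant C > 0 such that for every tree T on n ≥ 2 vertices, h(T) ≤ C · log n. -/

import Mathlib

/-- A rabbit's strategy on `G`: `r i` is the rabbit's position after the `i`-th shot
(`r 0` is the initial position); the rabbit always moves along an edge. -/
def RabbitStrategy {V : Type*} (G : SimpleGraph V) (r : ℕ → V) : Prop :=
  ∀ i : ℕ, G.Adj (r i) (r (i + 1))

/-- `k` hunters have a winning strategy on `G` with respect to `S`: there is a sequence of
shots `Hs` (where `Hs i` is the set `H_{i+1}` of vertices shot in round `i + 1`), each of
size at most `k`, such that every rabbit starting in `S` is eventually shot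
(`r i ∈ Hs i` expresses the paper's condition `r_{i-1} ∈ H_i` for some `i ≥ 1`). -/
def HuntersWinWrt {V : Type*} (G : SimpleGraph V) (k : ℕ) (S : Set V) : Prop :=
  ∃ Hs : ℕ → Finset V, (∀ i, (Hs i).card ≤ k) ∧
    ∀ r : ℕ → V, RabbitStrategy G r → r 0 ∈ S → ∃ i, r i ∈ Hs i

/-- `k` hunters have a winning strategy on `G`. -/
def HuntersWin {V : Type*} (G : SimpleGraph V) (k : ℕ) : Prop :=
  HuntersWinWrt G k Set.univ

/-- The hunter number `h(G)`: the minimum number of hunters having a winning strategy. -/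
noncomputable def hunterNumber {V : Type*} (G : SimpleGraph V) : ℕ :=
  sInf {k | HuntersWin G k}


set_option linter.unusedSectionVars false
set_option linter.unusedVariables false

section HunterAux

open Relation

variable {V : Type} [DecidableEq V] (G : SimpleGraph V)

/-- One step of the rabbit inside the vertex set `A`. -/
def Astep (A : Finset V) (x y : V) : Prop := G.Adj x y ∧ x ∈ A ∧ y ∈ A

/-- Reachability inside the vertex set `A`. -/
def Reach (A : Finset V) : V → V → Prop := Relation.ReflTransGen (Astep G A)

lemma reach_symm {A : Finset V} {x y : V} (h : Reach G A x y) : Reach G A y x :=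
  by haveI : Std.Symm (Astep G A) := ⟨fun _ _ hxy => ⟨hxy.1.symm, hxy.2.2, hxy.2.1⟩⟩
     exact (Relation.ReflTransGen.symmetric (r := Astep G A)).symm _ _ h

lemma reach_trans {A : Finset V} {x y z : V} (h1 : Reach G A x y) (h2 : Reach G A y z) :
    Reach G A x z := Relation.ReflTransGen.trans h1 h2

open scoped Classical in
/-- The connected component of `a` inside the vertex set `A`. -/
noncomputable def comp (A : Finset V) (a : V) : Finset V :=
  A.filter (fun x => Reach G A a x)

lemma mem_comp {A : Finset V} {a x : V} : x ∈ comp G A a ↔ x ∈ A ∧ Reach G A a x := by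
  classical
  simp [comp]

lemma comp_subset {A : Finset V} {a : V} : comp G A a ⊆ A :=
  fun _ hx => ((mem_comp G).mp hx).1

lemma mem_comp_self {A : Finset V} {a : V} (ha : a ∈ A) : a ∈ comp G A a :=
  (mem_comp G).mpr ⟨ha, Relation.ReflTransGen.refl⟩

lemma reach_comp {A : Finset V} {a y : V} (ha : a ∈ A) (h : Reach G A a y) :
    Reach G (comp G A a) a y := by
  induction h with
  | refl => exact Relation.ReflTransGen.refl
  | tail h1 h2 ih =>
      exact Relation.ReflTransGen.tail ih
        ⟨h2.1, (mem_comp G).mpr ⟨h2.2.1, h1⟩,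
          (mem_comp G).mpr ⟨h2.2.2, Relation.ReflTransGen.tail h1 h2⟩⟩

lemma comp_conn {A : Finset V} {a x y : V} (ha : a ∈ A) (hx : x ∈ comp G A a)
    (hy : y ∈ comp G A a) : Reach G (comp G A a) x y :=
  reach_trans G (reach_symm G (reach_comp G ha ((mem_comp G).mp hx).2))
    (reach_comp G ha ((mem_comp G).mp hy).2)

lemma reach_of_walk {A : Finset V} {x y : V} (w : G.Walk x y)
    (hs : ∀ z ∈ w.support, z ∈ A) : Reach G A x y := by
  induction w with
  | nil => exact Relation.ReflTransGen.refl
  | cons h p ih =>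
      refine Relation.ReflTransGen.head ⟨h, ?_, ?_⟩ (ih ?_)
      · exact hs _ (by simp)
      · exact hs _ (by simp [SimpleGraph.Walk.start_mem_support])
      · intro z hz; exact hs _ (by simp [hz])

lemma walk_of_reach {A : Finset V} {x y : V} (h : Reach G A x y) (hx : x ∈ A) :
    ∃ w : G.Walk x y, ∀ z ∈ w.support, z ∈ A := by
  induction h with
  | refl => exact ⟨SimpleGraph.Walk.nil, by simpa using hx⟩
  | tail h1 h2 ih =>
      obtain ⟨w, hw⟩ := ih
      refine ⟨w.concat h2.1, ?_⟩
      intro z hz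
      rw [SimpleGraph.Walk.support_concat, List.mem_append] at hz
      rcases hz with h | h
      · exact hw _ h
      · simp only [List.mem_singleton] at h
        subst h; exact h2.2.2

lemma path_of_reach {A : Finset V} {x y : V} (h : Reach G A x y) (hx : x ∈ A) :
    ∃ p : G.Walk x y, p.IsPath ∧ ∀ z ∈ p.support, z ∈ A := by
  obtain ⟨w, hw⟩ := walk_of_reach G h hx
  exact ⟨w.bypass, w.bypass_isPath, fun z hz => hw z (w.support_bypass_subset hz)⟩

lemma reach_exit {A : Finset V} {v : V} : ∀ {y : V}, Reach G A v y → y ≠ v →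
    ∃ u, G.Adj v u ∧ u ∈ A.erase v ∧ Reach G (A.erase v) u y := by
  intro y h
  induction h with
  | refl => intro hy; exact absurd rfl hy
  | @tail b c h1 h2 ih =>
      intro hc
      by_cases hb : b = v
      · subst hb
        exact ⟨c, h2.1, Finset.mem_erase.mpr ⟨hc, h2.2.2⟩, Relation.ReflTransGen.refl⟩
      · obtain ⟨u, h3, h4, h5⟩ := ih hb
        exact ⟨u, h3, h4, Relation.ReflTransGen.tail h5
          ⟨h2.1, Finset.mem_erase.mpr ⟨hb, h2.2.1⟩, Finset.mem_erase.mpr ⟨hc, h2.2.2⟩⟩⟩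

/-- Centroid: in an acyclic graph, a Reach-connected finite set `C` has a vertex `v`
whose removal leaves components of size at most `|C|/2`. -/
lemma centroid (hG : G.IsAcyclic) (C : Finset V) (hne : C.Nonempty)
    (hconn : ∀ x ∈ C, ∀ y ∈ C, Reach G C x y) :
    ∃ v ∈ C, ∀ b ∈ C.erase v, 2 * (comp G (C.erase v) b).card ≤ C.card := by
  classical
  obtain ⟨v, hv, hmin⟩ := Finset.exists_min_image C
    (fun x => (C.erase x).sup fun b => (comp G (C.erase x) b).card) hne
  refine ⟨v, hv, ?_⟩
  by_contra hbad
  push_neg at hbad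
  obtain ⟨b0, hb0, hD⟩ := hbad
  set D := comp G (C.erase v) b0 with hDdef
  have hb0v : b0 ≠ v := (Finset.mem_erase.mp hb0).1
  have hb0C : b0 ∈ C := (Finset.mem_erase.mp hb0).2
  have hb0D : b0 ∈ D := mem_comp_self G hb0
  have hDpos : 0 < D.card := Finset.card_pos.mpr ⟨b0, hb0D⟩
  obtain ⟨u, hadj, huev, hru⟩ := reach_exit G (hconn v hv b0 hb0C) hb0v
  have huD : u ∈ D := (mem_comp G).mpr ⟨huev, reach_symm G hru⟩
  have huv : u ≠ v := (Finset.mem_erase.mp huev).1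
  have huC : u ∈ C := (Finset.mem_erase.mp huev).2
  have key : ∀ c ∈ C.erase u, (comp G (C.erase u) c).card < D.card := by
    intro c hc
    set E := comp G (C.erase u) c with hEdef
    by_cases hvE : v ∈ E
    · -- E is disjoint from D
      have hdisj : ∀ w ∈ E, w ∉ D := by
        intro w hwE hwD
        have hwCu : w ∈ C.erase u := comp_subset G hwE
        have hwu : w ≠ u := (Finset.mem_erase.mp hwCu).1
        have hwv : w ≠ v := fun h => by
          rw [h] at hwD
          exact (Finset.mem_erase.mp (comp_subset G hwD)).1 rfl
        -- path from w to v avoiding u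
        have hr1 : Reach G (C.erase u) w v :=
          reach_trans G (reach_symm G ((mem_comp G).mp hwE).2) ((mem_comp G).mp hvE).2
        obtain ⟨p1, hp1, hp1sub⟩ := path_of_reach G hr1 hwCu
        -- path from w to u avoiding v, extended by the edge u-v
        have hr2 : Reach G (C.erase v) w u :=
          reach_trans G (reach_symm G ((mem_comp G).mp hwD).2) ((mem_comp G).mp huD).2
        obtain ⟨q, hq, hqsub⟩ := path_of_reach G hr2
          (Finset.mem_erase.mpr ⟨hwv, (Finset.mem_erase.mp hwCu).2⟩)
        have hvq : v ∉ q.support := fun h => (Finset.mem_erase.mp (hqsub v h)).1 rfl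
        have hp2 : (q.concat hadj.symm).IsPath := by
          rw [← SimpleGraph.Walk.isPath_reverse_iff, SimpleGraph.Walk.reverse_concat]
          rw [SimpleGraph.Walk.cons_isPath_iff]
          refine ⟨(SimpleGraph.Walk.isPath_reverse_iff q).mpr hq, ?_⟩
          simpa using hvq
        have := hG.path_unique (⟨p1, hp1⟩ : G.Path w v) ⟨q.concat hadj.symm, hp2⟩
        have hup1 : u ∈ p1.support := by
          have : p1 = q.concat hadj.symm := congrArg Subtype.val this
          rw [this, SimpleGraph.Walk.support_concat]
          exact List.mem_append.mpr (Or.inl q.end_mem_support)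
        exact (Finset.mem_erase.mp (hp1sub u hup1)).1 rfl
      have hsub : E ∪ D ⊆ C := by
        intro z hz
        rcases Finset.mem_union.mp hz with h | h
        · exact (Finset.mem_erase.mp (comp_subset G h)).2
        · exact (Finset.mem_erase.mp (comp_subset G h)).2
      have hcard : E.card + D.card ≤ C.card := by
        rw [← Finset.card_union_of_disjoint (Finset.disjoint_left.mpr hdisj)]
        exact Finset.card_le_card hsub
      omega
    · -- E ⊆ D.erase u
      have hEsub : E ⊆ D.erase u := by
        intro w hwE
        have hwCu : w ∈ C.erase u := comp_subset G hwE
        have hwu : w ≠ u := (Finset.mem_erase.mp hwCu).1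
        have hwC : w ∈ C := (Finset.mem_erase.mp hwCu).2
        have hwv : w ≠ v := by rintro rfl; exact hvE hwE
        obtain ⟨u', hadj', hu'ev, hru'⟩ := reach_exit G (hconn v hv w hwC) hwv
        obtain ⟨q, hq, hqsub⟩ := path_of_reach G hru' hu'ev
        by_cases hu : u ∈ q.support
        · have hreach : Reach G (C.erase v) u w :=
            reach_of_walk G (q.dropUntil u hu)
              (fun z hz => hqsub z (q.support_dropUntil_subset hu hz))
          exact Finset.mem_erase.mpr ⟨hwu, (mem_comp G).mpr
            ⟨Finset.mem_erase.mpr ⟨hwv, hwC⟩,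
             reach_trans G ((mem_comp G).mp huD).2 hreach⟩⟩
        · exfalso
          have hsup : ∀ z ∈ (SimpleGraph.Walk.cons hadj' q).support, z ∈ C.erase u := by
            intro z hz
            rw [SimpleGraph.Walk.support_cons, List.mem_cons] at hz
            rcases hz with rfl | hz
            · exact Finset.mem_erase.mpr ⟨huv.symm, hv⟩
            · refine Finset.mem_erase.mpr ⟨?_, (Finset.mem_erase.mp (hqsub z hz)).2⟩
              rintro rfl; exact hu hz
          have hreach : Reach G (C.erase u) v w :=
            reach_of_walk G (SimpleGraph.Walk.cons hadj' q) hsup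
          exact hvE ((mem_comp G).mpr ⟨Finset.mem_erase.mpr ⟨huv.symm, hv⟩,
            reach_trans G ((mem_comp G).mp hwE).2 (reach_symm G hreach)⟩)
      have := Finset.card_le_card hEsub
      have hDe : (D.erase u).card = D.card - 1 := Finset.card_erase_of_mem huD
      omega
  have hgu : ((C.erase u).sup fun b => (comp G (C.erase u) b).card) < D.card :=
    (Finset.sup_lt_iff (by simpa using hDpos)).mpr key
  have hDg : D.card ≤ (C.erase v).sup fun b => (comp G (C.erase v) b).card := by
    have h := Finset.le_sup (f := fun b => (comp G (C.erase v) b).card) hb0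
    exact h
  have := hmin u huC
  omega

/-- Bounded-time capture of rabbits confined (up to time `N`) to the set `A`. -/
def CaughtIn (k N : ℕ) (A : Finset V) : Prop :=
  ∃ Hs : ℕ → Finset V, (∀ i, (Hs i).card ≤ k) ∧
    ∀ r : ℕ → V, RabbitStrategy G r → (∀ i < N, r i ∈ A) → ∃ i < N, r i ∈ Hs i

lemma caughtIn_seq (k : ℕ) (F : V → Finset V) :
    ∀ L : List V, (∀ a ∈ L, ∃ N, CaughtIn G k N (F a)) →
      ∃ N, ∃ Hs : ℕ → Finset V, (∀ i, (Hs i).card ≤ k) ∧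
        ∀ a ∈ L, ∀ r : ℕ → V, RabbitStrategy G r →
          (∀ i < N, r i ∈ F a) → ∃ i < N, r i ∈ Hs i := by
  intro L
  induction L with
  | nil => exact fun _ => ⟨0, fun _ => ∅, fun i => by simp, by simp⟩
  | cons a L ih =>
      intro h
      obtain ⟨N1, Hs1, hc1, hcatch1⟩ := h a List.mem_cons_self
      obtain ⟨N2, Hs2, hc2, hcatch2⟩ := ih (fun b hb => h b (List.mem_cons_of_mem a hb))
      refine ⟨N1 + N2, fun i => if i < N1 then Hs1 i else Hs2 (i - N1), ?_, ?_⟩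
      · intro i; dsimp only; split
        · exact hc1 i
        · exact hc2 _
      · rintro b hb r hr hconf
        rcases List.mem_cons.mp hb with rfl | hb
        · obtain ⟨i, hi, hmem⟩ := hcatch1 r hr (fun i hi => hconf i (by omega))
          exact ⟨i, by omega, by simp only [if_pos hi]; exact hmem⟩
        · have hr' : RabbitStrategy G (fun i => r (N1 + i)) := by
            intro i
            have := hr (N1 + i)
            simpa [Nat.add_assoc] using this
          obtain ⟨i, hi, hmem⟩ := hcatch2 b hb _ hr' (fun i hi => hconf (N1 + i) (by omega))
          refine ⟨N1 + i, by omega, ?_⟩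
          simp only [if_neg (by omega : ¬ N1 + i < N1), Nat.add_sub_cancel_left]
          exact hmem

lemma caughtIn_main (hG : G.IsAcyclic) : ∀ m : ℕ, ∀ A : Finset V,
    (∀ a ∈ A, (comp G A a).card ≤ m) →
    ∃ N, CaughtIn G (Nat.log 2 m + 1) N A := by
  intro m
  induction m using Nat.strong_induction_on with
  | _ m ih =>
    intro A hA
    have hcompstrat : ∀ a ∈ A, ∃ N, CaughtIn G (Nat.log 2 m + 1) N (comp G A a) := by
      intro a ha
      rcases Nat.lt_or_ge m 2 with hm | hm
      · refine ⟨2, fun _ => ∅, fun i => by simp, ?_⟩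
        intro r hr hconf
        exfalso
        have h0 : r 0 ∈ comp G A a := hconf 0 (by norm_num)
        have h1 : r 1 ∈ comp G A a := hconf 1 (by norm_num)
        have hne : r 0 ≠ r 1 := G.ne_of_adj (hr 0)
        have h2 : 1 < (comp G A a).card := Finset.one_lt_card.mpr ⟨r 0, h0, r 1, h1, hne⟩
        have := hA a ha
        omega
      · obtain ⟨v, hvC, hcent⟩ := centroid G hG (comp G A a) ⟨a, mem_comp_self G ha⟩
          (fun x hx y hy => comp_conn G ha hx hy)
        have hhalf : ∀ b ∈ (comp G A a).erase v,
            (comp G ((comp G A a).erase v) b).card ≤ m / 2 := by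
          intro b hb
          have h1 := hcent b hb
          have h2 := hA a ha
          omega
        obtain ⟨N, Hs, hc, hcatch⟩ := ih (m / 2) (by omega) ((comp G A a).erase v) hhalf
        refine ⟨N, fun i => insert v (Hs i), ?_, ?_⟩
        · intro i
          show (insert v (Hs i)).card ≤ Nat.log 2 m + 1
          have h1 : (insert v (Hs i)).card ≤ (Hs i).card + 1 := Finset.card_insert_le _ _
          have h2 := hc i
          have h3 : Nat.log 2 (m / 2) = Nat.log 2 m - 1 := Nat.log_div_base 2 m
          have h4 : 0 < Nat.log 2 m := Nat.log_pos (by norm_num) hm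
          omega
        · intro r hr hconf
          by_cases hv : ∃ i, i < N ∧ r i = v
          · obtain ⟨i, hi, hri⟩ := hv
            exact ⟨i, hi, by simp [hri]⟩
          · push_neg at hv
            obtain ⟨i, hi, hmem⟩ := hcatch r hr
              (fun i hi => Finset.mem_erase.mpr ⟨hv i hi, hconf i hi⟩)
            exact ⟨i, hi, Finset.mem_insert_of_mem hmem⟩
    obtain ⟨N, Hs, hc, hcatch⟩ := caughtIn_seq G _ (comp G A) A.toList
      (fun a ha => hcompstrat a (Finset.mem_toList.mp ha))
    refine ⟨N + 1, Hs, hc, ?_⟩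
    intro r hr hconf
    have h0 : r 0 ∈ A := hconf 0 (by omega)
    have hcomp : ∀ i, i < N → r i ∈ comp G A (r 0) := by
      intro i
      induction i with
      | zero => exact fun _ => mem_comp_self G h0
      | succ j ihj =>
          intro hij
          have hj := ihj (by omega)
          exact (mem_comp G).mpr ⟨hconf (j + 1) (by omega),
            Relation.ReflTransGen.tail ((mem_comp G).mp hj).2
              ⟨hr j, hconf j (by omega), hconf (j + 1) (by omega)⟩⟩
    obtain ⟨i, hi, hmem⟩ := hcatch (r 0) (Finset.mem_toList.mpr h0) r hr hcomp
    exact ⟨i, by omega, hmem⟩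

lemma huntersWin_log [Fintype V] (hG : G.IsAcyclic) :
    HuntersWin G (Nat.log 2 (Fintype.card V) + 1) := by
  obtain ⟨N, Hs, hc, hcatch⟩ := caughtIn_main G hG (Fintype.card V) Finset.univ
    (fun a _ => Finset.card_le_univ _)
  refine ⟨Hs, hc, fun r hr _ => ?_⟩
  obtain ⟨i, _, hmem⟩ := hcatch r hr (fun i _ => Finset.mem_univ _)
  exact ⟨i, hmem⟩

end HunterAux

/-- There exists a constant C > 0 such that for every tree T on n ≥ 2 vertices,
h(T) ≤ C · log n. -/
theorem tree_hunterNumber_upper :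
    ∃ C : ℝ, 0 < C ∧
      ∀ (V : Type) [Fintype V] (G : SimpleGraph V), G.Connected → G.IsAcyclic →
        2 ≤ Fintype.card V →
        (hunterNumber G : ℝ) ≤ C * Real.log (Fintype.card V) := by
  refine ⟨2 / Real.log 2, by positivity, ?_⟩
  intro V _ G _ hacyc hcard
  classical
  have hwin : HuntersWin G (Nat.log 2 (Fintype.card V) + 1) := huntersWin_log G hacyc
  have hle : hunterNumber G ≤ Nat.log 2 (Fintype.card V) + 1 := Nat.sInf_le hwin
  set n := Fintype.card V with hn
  have hn2 : (2 : ℝ) ≤ (n : ℝ) := by exact_mod_cast hcard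
  have hlog2 : 0 < Real.log 2 := Real.log_pos (by norm_num)
  have hlogn : Real.log 2 ≤ Real.log n := Real.log_le_log (by norm_num) hn2
  have hnatlog : (Nat.log 2 n : ℝ) * Real.log 2 ≤ Real.log n := by
    have hpow : ((2 : ℕ) ^ (Nat.log 2 n) : ℝ) ≤ (n : ℝ) := by
      exact_mod_cast Nat.pow_log_le_self 2 (by omega)
    calc (Nat.log 2 n : ℝ) * Real.log 2 = Real.log ((2 : ℝ) ^ Nat.log 2 n) := by
          rw [Real.log_pow]
      _ ≤ Real.log n := Real.log_le_log (by positivity) (by push_cast at hpow ⊢; exact hpow)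
  calc (hunterNumber G : ℝ) ≤ (Nat.log 2 n : ℝ) + 1 := by exact_mod_cast hle
    _ ≤ Real.log n / Real.log 2 + Real.log n / Real.log 2 := by
        apply add_le_add
        · rw [le_div_iff₀ hlog2]; exact hnatlog
        · rw [le_div_iff₀ hlog2, one_mul]; exact hlogn
    _ = 2 / Real.log 2 * Real.log n := by ring
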